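/- Let A ⊆ B be an inclusion of (not necessarily unital) C*-algebras, A a closed *-subalgebra of B. Suppose that for every self-adjoint a ∈ A and every ε > 0 there exists a self-adjoint b ∈ B with finite spectrum (computed in the unitization of B) such that ‖a − b‖ ≤ ε. Then for every nonzero positive a ∈ A, the hereditary C*-subalgebra cl(aBa), the norm closure of {a·b·a : b ∈ B}, has an approximate unit of projections: for every positive x ∈ cl(aBa) and every ε > 0 there exists a projection p ∈ cl(aBa) with ‖p·x − x‖ < ε. -/

import Mathlib

open Filter Topology

section Defs

variable {B : Type*} [NonUnitalNormedRing B] [StarRing B] [PartialOrder B]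

/-- A projection in a C*-algebra: a self-adjoint idempotent. -/
def IsProjection (p : B) : Prop := star p = p ∧ p * p = p

/-- The hereditary subalgebra `cl(a·S·a)`: the norm closure of `{a * b * a : b ∈ S}`. -/
def herSub (S : Set B) (a : B) : Set B := closure {x : B | ∃ b ∈ S, x = a * b * a}

end Defs

noncomputable section
namespace Stmt5Aux
open Polynomial

def ramp (s t : ℝ) : ℝ := min 1 (max 0 ((2*t - s)/s))
lemma ramp_continuous (s : ℝ) : Continuous (ramp s) := by unfold ramp; fun_prop
lemma ramp_nonneg (s t : ℝ) : 0 ≤ ramp s t := le_min zero_le_one (le_max_left 0 _)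
lemma ramp_le_one (s t : ℝ) : ramp s t ≤ 1 := min_le_left _ _
lemma ramp_eq_one {s t : ℝ} (hs : 0 < s) (h : s ≤ t) : ramp s t = 1 := by
  unfold ramp
  rw [min_eq_left]
  exact le_max_of_le_right <| (one_le_div hs).mpr (by linarith)
lemma ramp_eq_zero {s t : ℝ} (hs : 0 < s) (h : t ≤ s/2) : ramp s t = 0 := by
  have hq : (2*t - s)/s ≤ 0 := div_nonpos_of_nonpos_of_nonneg (by linarith) hs.le
  unfold ramp
  rw [max_eq_left hq, min_eq_right zero_le_one]
lemma ramp_zero {s : ℝ} (hs : 0 < s) : ramp s 0 = 0 := ramp_eq_zero hs (by linarith)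
lemma abs_mul_ramp_sub (s : ℝ) {t : ℝ} (hs : 0 < s) (ht : 0 ≤ t) : |ramp s t * t - t| ≤ s := by
  rcases le_or_gt t s with h | h
  · have h1 := ramp_nonneg s t
    have h2 := ramp_le_one s t
    rw [abs_le]
    constructor <;> nlinarith
  · rw [ramp_eq_one hs h.le]; simpa using hs.le

def clamp (r t : ℝ) : ℝ := min 1 (max 0 ((t - (1/2 - r))/(2*r)))
lemma clamp_continuous (r : ℝ) : Continuous (clamp r) := by unfold clamp; fun_prop
lemma clamp_nonneg (r t : ℝ) : 0 ≤ clamp r t := le_min zero_le_one (le_max_left 0 _)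
lemma clamp_le_one (r t : ℝ) : clamp r t ≤ 1 := min_le_left _ _
lemma clamp_eq_zero {r t : ℝ} (hr : 0 < r) (h : t ≤ 1/2 - r) : clamp r t = 0 := by
  have hq : (t - (1/2 - r))/(2*r) ≤ 0 :=
    div_nonpos_of_nonpos_of_nonneg (by linarith) (by linarith)
  unfold clamp
  rw [max_eq_left hq, min_eq_right zero_le_one]
lemma clamp_zero {r : ℝ} (hr : 0 < r) (hr' : r ≤ 1/2) : clamp r 0 = 0 :=
  clamp_eq_zero hr (by linarith)
lemma clamp_eq_one {r t : ℝ} (hr : 0 < r) (h : 1/2 + r ≤ t) : clamp r t = 1 := by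
  unfold clamp
  rw [min_eq_left]
  exact le_max_of_le_right <| (one_le_div (by linarith)).mpr (by linarith)

lemma cfc_close {U : Type*} [CStarAlgebra U] [NormOneClass U] (u : U) (hu : IsSelfAdjoint u)
    (f : ℝ → ℝ) (hf : Continuous f) {Θ : ℝ} (hΘ : 0 < Θ) :
    ∃ η > 0, ∀ v : U, IsSelfAdjoint v → ‖u - v‖ ≤ η → ‖cfc f u - cfc f v‖ ≤ Θ := by
  set R := ‖u‖ + 1 with hR
  obtain ⟨q, hq⟩ := exists_polynomial_near_of_continuousOn (-R) R f hf.continuousOn (Θ/3)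
    (by linarith)
  obtain ⟨η₁, hη₁, hcont⟩ := Metric.continuousAt_iff.mp
    ((q.continuous_aeval (A := U)).continuousAt (x := u)) (Θ/3) (by linarith)
  refine ⟨min (η₁/2) 1, by positivity, fun v hv hdist => ?_⟩
  have hd1 : ‖u - v‖ ≤ η₁/2 := hdist.trans (min_le_left _ _)
  have hd2 : ‖u - v‖ ≤ 1 := hdist.trans (min_le_right _ _)
  have hvnorm : ‖v‖ ≤ R := by
    have h3 : ‖v‖ - ‖u‖ ≤ ‖v - u‖ := norm_sub_norm_le v u
    rw [norm_sub_rev] at h3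
    linarith
  have key : ∀ w : U, IsSelfAdjoint w → ‖w‖ ≤ R → ‖cfc f w - aeval w q‖ ≤ Θ/3 := by
    intro w hw hwR
    rw [← cfc_polynomial q w hw,
      ← cfc_sub f (fun t => q.eval t) w hf.continuousOn q.continuous.continuousOn]
    refine norm_cfc_le (by linarith) fun t ht => ?_
    have ht' : ‖t‖ ≤ ‖w‖ := spectrum.norm_le_norm_of_mem ht
    rw [Real.norm_eq_abs] at ht' ⊢
    have htI : t ∈ Set.Icc (-R) R := by
      rw [Set.mem_Icc]
      constructor <;> [linarith [abs_le.mp (ht'.trans hwR) |>.1];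
        linarith [abs_le.mp (ht'.trans hwR) |>.2]]
    have := hq t htI
    rw [abs_sub_comm] at this
    linarith
  have b1 := key u hu (by simp [hR])
  have b3 := key v hv hvnorm
  have b2 : ‖aeval u q - aeval v q‖ ≤ Θ/3 := by
    have hduv : dist v u < η₁ := by
      rw [dist_eq_norm, norm_sub_rev]
      linarith
    have := hcont hduv
    rw [dist_eq_norm, norm_sub_rev] at this
    linarith
  calc ‖cfc f u - cfc f v‖
      = ‖(cfc f u - aeval u q) + (aeval u q - aeval v q) + (aeval v q - cfc f v)‖ := by
        congr 1; abel
    _ ≤ ‖cfc f u - aeval u q‖ + ‖aeval u q - aeval v q‖ + ‖aeval v q - cfc f v‖ :=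
        norm_add₃_le
    _ ≤ Θ/3 + Θ/3 + Θ/3 := by
        refine add_le_add (add_le_add b1 b2) ?_
        rw [norm_sub_rev]; exact b3
    _ = Θ := by ring

variable {B : Type*} [NonUnitalCStarAlgebra B] [PartialOrder B] [StarOrderedRing B]

lemma cfcn_close (a : B) (ha : IsSelfAdjoint a) (f : ℝ → ℝ) (hf : Continuous f) (hf0 : f 0 = 0)
    {Θ : ℝ} (hΘ : 0 < Θ) :
    ∃ η > 0, ∀ b : B, IsSelfAdjoint b → ‖a - b‖ ≤ η → ‖cfcₙ f a - cfcₙ f b‖ ≤ Θ := by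
  obtain ⟨η, hη, H⟩ := cfc_close (U := Unitization ℂ B) a
    ((Unitization.isSelfAdjoint_inr (R := ℂ)).mpr ha) f hf hΘ
  refine ⟨η, hη, fun b hb hab => ?_⟩
  have h1 : ‖(a : Unitization ℂ B) - (b : Unitization ℂ B)‖ ≤ η := by
    rw [← Unitization.inr_sub ℂ a b, Unitization.norm_inr]; exact hab
  have := H b ((Unitization.isSelfAdjoint_inr (R := ℂ)).mpr hb) h1
  rwa [← Unitization.real_cfcₙ_eq_cfc_inr a f hf0, ← Unitization.real_cfcₙ_eq_cfc_inr b f hf0,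
    ← Unitization.inr_sub ℂ, Unitization.norm_inr] at this

lemma finite_quasispectrum (b : B) (hfin : (spectrum ℂ (b : Unitization ℂ B)).Finite) :
    (quasispectrum ℝ b).Finite := by
  rw [Unitization.quasispectrum_eq_spectrum_inr' ℝ ℂ b,
    ← spectrum.preimage_algebraMap (S := ℂ)]
  exact hfin.preimage ((algebraMap ℝ ℂ).injective.injOn)

end Stmt5Aux
end


set_option maxHeartbeats 2000000 in
open Stmt5Aux in
theorem stmt5 {B : Type*} [NonUnitalCStarAlgebra B] [PartialOrder B] [StarOrderedRing B]
    (A : NonUnitalStarSubalgebra ℂ B) (hA : IsClosed (A : Set B))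
    (h : ∀ a ∈ A, IsSelfAdjoint a → ∀ ε : ℝ, 0 < ε →
      ∃ b : B, IsSelfAdjoint b ∧ (spectrum ℂ (b : Unitization ℂ B)).Finite ∧ ‖a - b‖ ≤ ε) :
    ∀ a ∈ A, 0 ≤ a → a ≠ 0 →
      ∀ x ∈ herSub (Set.univ : Set B) a, 0 ≤ x → ∀ ε : ℝ, 0 < ε →
        ∃ p ∈ herSub (Set.univ : Set B) a, IsProjection p ∧ ‖p * x - x‖ < ε := by
  intro a haA ha0 _hane x hx _hx0 ε hε
  have haSA : IsSelfAdjoint a := .of_nonneg ha0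
  set S : Set B := {w : B | ∃ m ∈ (Set.univ : Set B), w = a * m * a} with hSdef
  have hSmem : ∀ m : B, a * m * a ∈ S := fun m => ⟨m, trivial, rfl⟩
  have hherS : herSub (Set.univ : Set B) a = closure S := rfl
  set X := ‖x‖ with hXdef
  have hX0 : 0 ≤ X := norm_nonneg x
  set β : ℝ := min (ε/(68*(X+1))) (1/100) with hβdef
  have hβpos : 0 < β := lt_min (by positivity) (by norm_num)
  have hβ1 : β ≤ 1/100 := min_le_right _ _
  have hβε : 17 * β * X ≤ ε/4 := by
    have h1 : β ≤ ε/(68*(X+1)) := min_le_left _ _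
    have h2 : 17 * β * X ≤ 17 * (ε/(68*(X+1))) * X := by
      have := mul_le_mul_of_nonneg_right (mul_le_mul_of_nonneg_left h1 (by norm_num : (0:ℝ) ≤ 17)) hX0
      linarith
    have h3 : 17 * (ε/(68*(X+1))) * X ≤ ε/4 := by
      rw [show 17 * (ε/(68*(X+1))) * X = (17*ε*X)/(68*(X+1)) by ring,
        div_le_div_iff₀ (by positivity) (by norm_num)]
      nlinarith only [hε, hX0, mul_nonneg hε.le hX0]
    linarith
  -- Step 1: approximate x from S, choose δ
  obtain ⟨z, hzS, hz⟩ : ∃ z ∈ S, ‖x - z‖ < ε/8 := by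
    rw [hherS] at hx
    obtain ⟨z, hzS, hz⟩ := Metric.mem_closure_iff.mp hx (ε/8) (by linarith)
    exact ⟨z, hzS, by rwa [dist_eq_norm] at hz⟩
  obtain ⟨c, -, rfl⟩ := hzS
  set δ : ℝ := (ε/8)/(‖c*a‖+1) with hδdef
  have hδpos : 0 < δ := by positivity
  have hδca : δ * ‖c*a‖ ≤ ε/8 := by
    rw [hδdef, div_mul_eq_mul_div, div_le_iff₀ (by positivity)]
    nlinarith only [hε, norm_nonneg (c*a)]
  have hqa : ∀ t ∈ quasispectrum ℝ a, 0 ≤ t := quasispectrum_nonneg_of_nonneg a ha0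
  set Gδa := cfcₙ (ramp δ) a with hGδa_def
  have hrc : ∀ s : ℝ, ContinuousOn (ramp s) (quasispectrum ℝ a) :=
    fun s => (ramp_continuous s).continuousOn
  have hGδa_norm : ‖Gδa‖ ≤ 1 := norm_cfcₙ_le fun t _ => by
    rw [Real.norm_eq_abs, abs_of_nonneg (ramp_nonneg _ _)]; exact ramp_le_one _ _
  have E1 : ‖Gδa * a - a‖ ≤ δ := by
    have e1 : Gδa * a = cfcₙ (fun t => ramp δ t * t) a := by
      rw [cfcₙ_mul (ramp δ) (fun t => t) a (hrc δ) (ramp_zero hδpos)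
        continuous_id.continuousOn rfl, cfcₙ_id' ℝ a]
    have e2 : Gδa * a - a = cfcₙ (fun t => ramp δ t * t - t) a := by
      rw [cfcₙ_sub (fun t => ramp δ t * t) (fun t => t) a
        (((ramp_continuous δ).mul continuous_id).continuousOn)
        (by simp [ramp_zero hδpos]) continuous_id.continuousOn rfl, ← e1, cfcₙ_id' ℝ a]
    rw [e2]
    exact norm_cfcₙ_le fun t ht => by
      rw [Real.norm_eq_abs]; exact abs_mul_ramp_sub δ hδpos (hqa t ht)
  have step1 : ‖Gδa * x - x‖ ≤ 3*ε/8 := by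
    have d1 : Gδa * x - x = Gδa * (x - a * c * a) + (Gδa * a - a) * (c * a) + (a * c * a - x) := by
      noncomm_ring
    rw [d1]
    calc ‖Gδa * (x - a * c * a) + (Gδa * a - a) * (c * a) + (a * c * a - x)‖
        ≤ ‖Gδa * (x - a * c * a)‖ + ‖(Gδa * a - a) * (c * a)‖ + ‖a * c * a - x‖ := norm_add₃_le
      _ ≤ ‖Gδa‖ * ‖x - a * c * a‖ + ‖Gδa * a - a‖ * ‖c * a‖ + ‖a * c * a - x‖ := by
          gcongr <;> exact norm_mul_le _ _
      _ ≤ 1 * (ε/8) + δ * ‖c*a‖ + ε/8 := by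
          have hz'' : ‖a*c*a - x‖ ≤ ε/8 := by rw [norm_sub_rev]; exact hz.le
          refine add_le_add (add_le_add ?_ ?_) hz''
          · exact mul_le_mul hGδa_norm hz.le (norm_nonneg _) zero_le_one
          · exact mul_le_mul_of_nonneg_right E1 (norm_nonneg _)
      _ ≤ 3*ε/8 := by linarith

  -- Step 2: choose η via cfcn_close for ramp δ and ramp δ₀, get b
  set δ₀ : ℝ := δ * β with hδ₀def
  have hδ₀pos : 0 < δ₀ := by positivity
  have hδ₀half : δ₀ ≤ δ/2 := by nlinarith only [hβ1, hδpos, hβpos, hδ₀def]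
  obtain ⟨η₁, hη₁, H₁⟩ := cfcn_close a haSA (ramp δ) (ramp_continuous δ) (ramp_zero hδpos) hβpos
  obtain ⟨η₂, hη₂, H₂⟩ := cfcn_close a haSA (ramp δ₀) (ramp_continuous δ₀) (ramp_zero hδ₀pos)
    hβpos
  obtain ⟨b, hbsa, hbfin, hab⟩ := h a haA haSA (min η₁ η₂) (lt_min hη₁ hη₂)
  have hqb_fin : (quasispectrum ℝ b).Finite := finite_quasispectrum b hbfin
  have hbcont : ∀ f : ℝ → ℝ, ContinuousOn f (quasispectrum ℝ b) := fun f => hqb_fin.continuousOn f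
  -- the spectral projection p of b
  set f₀ : ℝ → ℝ := fun t => if δ₀ < t then 1 else 0 with hf₀def
  have hf₀0 : f₀ 0 = 0 := by
    rw [hf₀def]; simp only [if_neg (by linarith : ¬ δ₀ < 0)]
  set p := cfcₙ f₀ b with hpdef
  have hpsa : IsSelfAdjoint p := cfcₙ_predicate f₀ b
  have hp_norm : ‖p‖ ≤ 1 := norm_cfcₙ_le fun t _ => by
    rw [Real.norm_eq_abs, hf₀def]; dsimp only; split <;> norm_num
  have hpp : p * p = p := by
    rw [hpdef, ← cfcₙ_mul f₀ f₀ b (hbcont f₀) hf₀0 (hbcont f₀) hf₀0]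
    exact cfcₙ_congr fun t _ => by simp only [hf₀def]; split <;> norm_num
  -- p acts as a unit on ramp δ of b
  set Gδb := cfcₙ (ramp δ) b with hGδb_def
  have hωδ : ‖Gδa - Gδb‖ ≤ β := H₁ b hbsa (hab.trans (min_le_left _ _))
  have hpGδb : p * Gδb = Gδb := by
    rw [hpdef, hGδb_def, ← cfcₙ_mul f₀ (ramp δ) b (hbcont f₀) hf₀0
      (ramp_continuous δ).continuousOn (ramp_zero hδpos)]
    refine cfcₙ_congr fun t _ => ?_
    simp only [hf₀def]
    by_cases ht : δ₀ < t
    · rw [if_pos ht, one_mul]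
    · rw [if_neg ht, zero_mul, ramp_eq_zero hδpos (by push_neg at ht; linarith)]
  have hpGδa : ‖p * Gδa - Gδa‖ ≤ 2*β := by
    have hd : p * Gδa - Gδa = p * (Gδa - Gδb) + (Gδb - Gδa) := by
      rw [mul_sub, hpGδb]; abel
    rw [hd]
    calc ‖p * (Gδa - Gδb) + (Gδb - Gδa)‖ ≤ ‖p * (Gδa - Gδb)‖ + ‖Gδb - Gδa‖ := norm_add_le _ _
      _ ≤ ‖p‖ * ‖Gδa - Gδb‖ + ‖Gδb - Gδa‖ := by gcongr; exact norm_mul_le _ _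
      _ ≤ 1 * β + β := by
          rw [norm_sub_rev Gδb]
          exact add_le_add (mul_le_mul hp_norm hωδ (norm_nonneg _) zero_le_one) hωδ
      _ = 2*β := by ring
  -- ramp δ₀ versions
  set Ga₀ := cfcₙ (ramp δ₀) a with hGa₀def
  set Gb₀ := cfcₙ (ramp δ₀) b with hGb₀def
  have hω : ‖Ga₀ - Gb₀‖ ≤ β := H₂ b hbsa (hab.trans (min_le_right _ _))
  have hGa₀sa : IsSelfAdjoint Ga₀ := cfcₙ_predicate _ a
  have hGa₀_norm : ‖Ga₀‖ ≤ 1 := norm_cfcₙ_le fun t _ => by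
    rw [Real.norm_eq_abs, abs_of_nonneg (ramp_nonneg _ _)]; exact ramp_le_one _ _
  have hGb₀_norm : ‖Gb₀‖ ≤ 1 := norm_cfcₙ_le fun t _ => by
    rw [Real.norm_eq_abs, abs_of_nonneg (ramp_nonneg _ _)]; exact ramp_le_one _ _
  have hGb₀p : Gb₀ * p = p := by
    rw [hpdef, hGb₀def, ← cfcₙ_mul (ramp δ₀) f₀ b (ramp_continuous δ₀).continuousOn
      (ramp_zero hδ₀pos) (hbcont f₀) hf₀0]
    refine cfcₙ_congr fun t _ => ?_
    simp only [hf₀def]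
    by_cases ht : δ₀ < t
    · rw [if_pos ht, ramp_eq_one hδ₀pos ht.le, one_mul]
    · rw [if_neg ht, mul_zero]
  have hpGb₀ : p * Gb₀ = p := by
    rw [hpdef, hGb₀def, ← cfcₙ_mul f₀ (ramp δ₀) b (hbcont f₀) hf₀0
      (ramp_continuous δ₀).continuousOn (ramp_zero hδ₀pos)]
    refine cfcₙ_congr fun t _ => ?_
    simp only [hf₀def]
    by_cases ht : δ₀ < t
    · rw [if_pos ht, ramp_eq_one hδ₀pos ht.le, mul_one]
    · rw [if_neg ht, zero_mul]
  -- y := Ga₀ * p * Ga₀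
  set y := Ga₀ * p * Ga₀ with hydef
  have norm_mul3 : ∀ u v w : B, ‖u*v*w‖ ≤ ‖u‖*‖v‖*‖w‖ := fun u v w =>
    (norm_mul_le _ _).trans (mul_le_mul_of_nonneg_right (norm_mul_le _ _) (norm_nonneg _))
  have hysa : IsSelfAdjoint y := by
    rw [IsSelfAdjoint, hydef, star_mul, star_mul, hGa₀sa.star_eq, hpsa.star_eq, mul_assoc]
  have hynorm : ‖y‖ ≤ 1 := by
    calc ‖y‖ ≤ ‖Ga₀‖*‖p‖*‖Ga₀‖ := norm_mul3 _ _ _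
      _ ≤ 1*1*1 := by
          gcongr <;> first | exact hGa₀_norm | exact hp_norm | exact norm_nonneg _
      _ = 1 := by norm_num
  have hynn : 0 ≤ y := by
    have e : y = (Ga₀ * p) * star (Ga₀ * p) := by
      rw [star_mul, hpsa.star_eq, hGa₀sa.star_eq, hydef,
        show Ga₀ * p * (p * Ga₀) = Ga₀ * (p * p) * Ga₀ by noncomm_ring, hpp]
    rw [e]; exact mul_star_self_nonneg _
  have hqy : ∀ t ∈ quasispectrum ℝ y, 0 ≤ t := quasispectrum_nonneg_of_nonneg y hynn
  -- y is in S (exactly)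
  set v : ℝ → ℝ := fun t => ramp δ₀ t * (max t (δ₀/2))⁻¹ with hvdef
  have hmaxne : ∀ t : ℝ, max t (δ₀/2) ≠ 0 :=
    fun t => ne_of_gt (lt_max_iff.mpr (Or.inr (by positivity)))
  have hvcont : Continuous v := (ramp_continuous δ₀).mul
    ((continuous_id.max continuous_const).inv₀ hmaxne)
  have hv0 : v 0 = 0 := by rw [hvdef]; dsimp only; rw [ramp_zero hδ₀pos, zero_mul]
  set m := cfcₙ v a with hmdef
  have hGa₀_fact : Ga₀ = a * m := by
    have e : a * m = cfcₙ (fun t => t * v t) a := by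
      rw [cfcₙ_mul (fun t => t) v a continuous_id.continuousOn rfl hvcont.continuousOn hv0,
        cfcₙ_id' ℝ a]
    rw [hGa₀def, e]
    refine cfcₙ_congr fun t ht => ?_
    rcases le_or_gt t (δ₀/2) with h1 | h1
    · simp only [hvdef]
      rw [ramp_eq_zero hδ₀pos h1, zero_mul, mul_zero]
    · have htne : t ≠ 0 := (lt_trans (by positivity : (0:ℝ) < δ₀/2) h1).ne'
      simp only [hvdef]
      rw [max_eq_left h1.le]
      field_simp
  have hGa₀_fact' : Ga₀ = m * a := by
    have e : m * a = cfcₙ (fun t => v t * t) a := by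
      rw [cfcₙ_mul v (fun t => t) a hvcont.continuousOn hv0 continuous_id.continuousOn rfl,
        cfcₙ_id' ℝ a]
    rw [hGa₀def, e]
    refine cfcₙ_congr fun t ht => ?_
    rcases le_or_gt t (δ₀/2) with h1 | h1
    · simp only [hvdef]
      rw [ramp_eq_zero hδ₀pos h1, zero_mul, zero_mul]
    · have htne : t ≠ 0 := (lt_trans (by positivity : (0:ℝ) < δ₀/2) h1).ne'
      simp only [hvdef]
      rw [max_eq_left h1.le]
      field_simp
  have hyS : y ∈ S := by
    have e : y = a * (m * p * m) * a := by
      rw [hydef]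
      nth_rw 1 [hGa₀_fact]
      nth_rw 1 [hGa₀_fact']
      noncomm_ring
    rw [e]; exact hSmem _
  -- almost projection estimates
  have hGb₀pGb₀ : Gb₀ * p * Gb₀ = p := by rw [hGb₀p, hpGb₀]
  have hyp : ‖y - p‖ ≤ 2*β := by
    have hd : y - p = (Ga₀ - Gb₀) * p * Ga₀ + Gb₀ * p * (Ga₀ - Gb₀) := by
      have e : (Ga₀ - Gb₀) * p * Ga₀ + Gb₀ * p * (Ga₀ - Gb₀)
          = Ga₀ * p * Ga₀ - Gb₀ * p * Gb₀ := by noncomm_ring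
      rw [e, hGb₀pGb₀, hydef]
    rw [hd]
    calc ‖(Ga₀ - Gb₀) * p * Ga₀ + Gb₀ * p * (Ga₀ - Gb₀)‖
        ≤ ‖(Ga₀ - Gb₀) * p * Ga₀‖ + ‖Gb₀ * p * (Ga₀ - Gb₀)‖ := norm_add_le _ _
      _ ≤ ‖Ga₀ - Gb₀‖*‖p‖*‖Ga₀‖ + ‖Gb₀‖*‖p‖*‖Ga₀ - Gb₀‖ :=
          add_le_add (norm_mul3 _ _ _) (norm_mul3 _ _ _)
      _ ≤ β*1*1 + 1*1*β := by
          gcongr <;>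
            first | exact hω | exact hp_norm | exact hGa₀_norm | exact hGb₀_norm
      _ ≤ 2*β := by linarith
  set κ := ‖y*y - y‖ with hκdef
  have hκ0 : 0 ≤ κ := norm_nonneg _
  have hκ : κ ≤ 6*β := by
    have hid : y*y - y = y*(y-p) + (y-p)*p + (p*p - p) + (p - y) := by noncomm_ring
    calc κ = ‖y*(y-p) + (y-p)*p + (p*p - p) + (p - y)‖ := by rw [hκdef, hid]
      _ = ‖y*(y-p) + (y-p)*p + (p - y)‖ := by rw [hpp, sub_self, add_zero]
      _ ≤ ‖y*(y-p)‖ + ‖(y-p)*p‖ + ‖p - y‖ := norm_add₃_le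
      _ ≤ ‖y‖*‖y-p‖ + ‖y-p‖*‖p‖ + ‖y-p‖ := by
          refine add_le_add (add_le_add (norm_mul_le _ _) (norm_mul_le _ _)) ?_
          rw [norm_sub_rev]
      _ ≤ 1*(2*β) + (2*β)*1 + 2*β := by
          refine add_le_add (add_le_add ?_ ?_) hyp
          · exact mul_le_mul hynorm hyp (norm_nonneg _) zero_le_one
          · exact mul_le_mul hyp hp_norm (norm_nonneg _) (by linarith only [hβpos])
      _ ≤ 6*β := by linarith only [hβpos]
  have hκ14 : κ < 1/4 := by linarith only [hκ, hβ1]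
  set r := Real.sqrt (1/4 - κ) with hrdef
  have hr2 : r^2 = 1/4 - κ := Real.sq_sqrt (by linarith)
  have hrpos : 0 < r := Real.sqrt_pos.mpr (by linarith)
  have hrle : r ≤ 1/2 := by
    rw [hrdef, show (1:ℝ)/2 = Real.sqrt ((1/2)^2) from (Real.sqrt_sq (by norm_num)).symm]
    exact Real.sqrt_le_sqrt (by norm_num; linarith only [hκ0])
  have hr04 : 2/5 ≤ r := by
    rw [hrdef]
    rw [show (2:ℝ)/5 = Real.sqrt ((2/5)^2) from (Real.sqrt_sq (by norm_num)).symm]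
    exact Real.sqrt_le_sqrt (by nlinarith only [hκ, hβ1])
  have hspec : ∀ t ∈ quasispectrum ℝ y, |t*t - t| ≤ κ := by
    intro t ht
    have hsq : cfcₙ (fun s : ℝ => s*s - s) y = y*y - y := by
      rw [cfcₙ_sub (fun s => s*s) (fun s => s) y
        ((continuous_id.mul continuous_id).continuousOn) (by norm_num)
        continuous_id.continuousOn rfl,
        cfcₙ_mul (fun s => s) (fun s => s) y continuous_id.continuousOn rfl
        continuous_id.continuousOn rfl, cfcₙ_id' ℝ y]
    have := norm_apply_le_norm_cfcₙ (fun s : ℝ => s*s - s) y ht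
      (((continuous_id.mul continuous_id).sub continuous_id).continuousOn) (by norm_num) hysa
    rwa [hsq, Real.norm_eq_abs] at this
  have hgap : ∀ t ∈ quasispectrum ℝ y, t ≤ 1/2 - r ∨ 1/2 + r ≤ t := by
    intro t ht
    by_contra hcon
    push_neg at hcon
    obtain ⟨h1, h2⟩ := hcon
    have habs := abs_le.mp (hspec t ht)
    linarith only [mul_pos (by linarith only [h1] : (0:ℝ) < t - (1/2 - r))
      (by linarith only [h2] : (0:ℝ) < 1/2 + r - t), habs.1, hr2]
  set F := clamp r with hFdef
  have hFcont : Continuous F := clamp_continuous r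
  have hF0 : F 0 = 0 := clamp_zero hrpos hrle
  set p' := cfcₙ F y with hp'def
  have hp'sa : IsSelfAdjoint p' := cfcₙ_predicate F y
  have hFval : ∀ t ∈ quasispectrum ℝ y, F t = 0 ∨ F t = 1 := by
    intro t ht
    rcases hgap t ht with h1 | h1
    · exact Or.inl (clamp_eq_zero hrpos h1)
    · exact Or.inr (clamp_eq_one hrpos h1)
  have hp'p' : p' * p' = p' := by
    rw [hp'def, ← cfcₙ_mul F F y hFcont.continuousOn hF0 hFcont.continuousOn hF0]
    exact cfcₙ_congr fun t ht => by rcases hFval t ht with h1 | h1 <;> rw [h1] <;> norm_num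
  -- p' is in S
  set w : ℝ → ℝ := fun t => F t * ((max t (1/2))⁻¹ * (max t (1/2))⁻¹) with hwdef
  have hmaxne2 : ∀ t : ℝ, max t ((1:ℝ)/2) ≠ 0 :=
    fun t => ne_of_gt (lt_max_iff.mpr (Or.inr (by norm_num)))
  have hwcont : Continuous w := hFcont.mul
    (((continuous_id.max continuous_const).inv₀ hmaxne2).mul
      ((continuous_id.max continuous_const).inv₀ hmaxne2))
  have hw0 : w 0 = 0 := by rw [hwdef]; dsimp only; rw [hF0, zero_mul]
  have hfact : p' = y * cfcₙ w y * y := by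
    have e : y * cfcₙ w y * y = cfcₙ (fun t => t * w t * t) y := by
      rw [cfcₙ_mul (fun t => t * w t) (fun t => t) y
        ((continuous_id.mul hwcont).continuousOn) (by simp only [hw0, mul_zero])
        continuous_id.continuousOn rfl,
        cfcₙ_mul (fun t => t) w y continuous_id.continuousOn rfl hwcont.continuousOn hw0,
        cfcₙ_id' ℝ y]
    rw [hp'def, e]
    refine cfcₙ_congr fun t ht => ?_
    rcases hgap t ht with h1 | h1
    · simp only [hwdef, hFdef]
      rw [clamp_eq_zero hrpos h1]
      ring
    · have ht2 : (1:ℝ)/2 ≤ t := by linarith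
      have htne : t ≠ 0 := by intro hc; rw [hc] at ht2; norm_num at ht2
      simp only [hwdef, hFdef]
      rw [clamp_eq_one hrpos h1, max_eq_left ht2]
      field_simp
  have hp'S : p' ∈ S := by
    obtain ⟨n, -, hn⟩ := hyS
    have e : (a*n*a) * cfcₙ w y * (a*n*a) = a * (n * a * cfcₙ w y * a * n) * a := by
      noncomm_ring
    rw [hfact]
    nth_rw 1 [hn]
    nth_rw 2 [hn]
    rw [e]
    exact hSmem _
  -- distance from p' to p
  have hp'y : ‖p' - y‖ ≤ 2*κ := by
    have e : p' - y = cfcₙ (fun t => F t - t) y := by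
      rw [cfcₙ_sub F (fun t => t) y hFcont.continuousOn hF0 continuous_id.continuousOn rfl,
        cfcₙ_id' ℝ y, hp'def]
    rw [e]
    refine norm_cfcₙ_le fun t ht => ?_
    have ht0 := hqy t ht
    have habs := abs_le.mp (hspec t ht)
    rw [Real.norm_eq_abs]
    simp only [hFdef]
    rcases hgap t ht with h1 | h1
    · rw [clamp_eq_zero hrpos h1, abs_le]
      have ht1 : t ≤ 1/10 := by linarith
      have hprod : 0 ≤ (1/10 - t) * t := mul_nonneg (by linarith) ht0
      constructor
      · linarith only [habs.1, hκ0, hprod]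
      · linarith only [ht0, hκ0]
    · rw [clamp_eq_one hrpos h1, abs_le]
      have ht9 : (9:ℝ)/10 ≤ t := by linarith
      constructor
      · rcases le_or_gt t 1 with hc | hc
        · linarith only [hc, hκ0]
        · linarith only [habs.2, hκ0, sq_nonneg (t-1)]
      · rcases le_or_gt 1 t with hc | hc
        · linarith only [hc, hκ0]
        · have hprod : 0 ≤ (t - 9/10) * (1 - t) :=
            mul_nonneg (by linarith only [ht9]) (by linarith only [hc])
          linarith only [habs.1, hκ0, hprod]
  have hp'p : ‖p' - p‖ ≤ 14*β := by
    calc ‖p' - p‖ = ‖(p' - y) + (y - p)‖ := by congr 1; abel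
      _ ≤ ‖p' - y‖ + ‖y - p‖ := norm_add_le _ _
      _ ≤ 2*κ + 2*β := add_le_add hp'y hyp
      _ ≤ 14*β := by linarith only [hκ, hκ0]
  -- final assembly
  refine ⟨p', by rw [hherS]; exact subset_closure hp'S, ⟨hp'sa.star_eq, hp'p'⟩, ?_⟩
  have decomp : p' * x - x
      = (p' - p) * x + p * (x - Gδa * x) + (p * Gδa - Gδa) * x + (Gδa * x - x) := by
    noncomm_ring
  have hx1 : ‖x - Gδa*x‖ ≤ 3*ε/8 := by rw [norm_sub_rev]; exact step1
  calc ‖p' * x - x‖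
      = ‖(p' - p) * x + p * (x - Gδa * x) + (p * Gδa - Gδa) * x + (Gδa * x - x)‖ := by
        rw [decomp]
    _ ≤ ‖(p' - p) * x + p * (x - Gδa * x) + (p * Gδa - Gδa) * x‖ + ‖Gδa * x - x‖ :=
        norm_add_le _ _
    _ ≤ (‖(p' - p) * x‖ + ‖p * (x - Gδa * x)‖ + ‖(p * Gδa - Gδa) * x‖) + ‖Gδa * x - x‖ := by
        gcongr
        exact norm_add₃_le
    _ ≤ (‖p' - p‖*‖x‖ + ‖p‖*‖x - Gδa * x‖ + ‖p * Gδa - Gδa‖*‖x‖) + ‖Gδa * x - x‖ := by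
        gcongr <;> exact norm_mul_le _ _
    _ ≤ ((14*β)*X + 1*(3*ε/8) + (2*β)*X) + 3*ε/8 := by
        refine add_le_add (add_le_add (add_le_add ?_ ?_) ?_) step1
        · exact mul_le_mul_of_nonneg_right hp'p (norm_nonneg x)
        · exact mul_le_mul hp_norm hx1 (norm_nonneg _) zero_le_one
        · exact mul_le_mul_of_nonneg_right hpGδa (norm_nonneg x)
    _ < ε := by linarith only [hβε, mul_nonneg hβpos.le hX0, hε]
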